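/- Let E be a finite group having a subgroup D of index 2 with D isomorphic to the dihedral group D₈ of order 8. Then E is isomorphic to exactly one of the following four pairwise non-isomorphic groups: D₈ × C₂; the central product D₈ ∘ C₄ (the quotient of D₈ × C₄ by the order-2 subgroup generated by (s₁, c²), with c a generator of C₄ and s₁ the central involution of D₈); the dihedral group D₁₆ of order 16; and the semidihedral group SD₁₆ = ⟨x, y ∣ x⁸ = y² = 1, y x y⁻¹ = x³⟩. -/

import Mathlib

/-- The units of `ZMod q` act by multiplication; multiplicatively this gives
`(ZMod q)ˣ →* MulAut (Multiplicative (ZMod q))`. -/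
def zmodUnitsToMulAut (q : ℕ) : (ZMod q)ˣ →* MulAut (Multiplicative (ZMod q)) where
  toFun u := AddEquiv.toMultiplicative (DistribMulAction.toAddAut (ZMod q)ˣ (ZMod q) u)
  map_one' := by
    ext x
    simp [AddEquiv.toMultiplicative, DistribMulAction.toAddAut]
    rfl
  map_mul' u v := by
    ext x
    simp [AddEquiv.toMultiplicative, DistribMulAction.toAddAut, mul_smul]
    rfl

/-- The homomorphism from the cyclic group of order `2` sending the generator to a
given element `z` with `z ^ 2 = 1`. -/
def c2hom {G : Type*} [Group G] (z : G) (hz : z ^ 2 = 1) : Multiplicative (ZMod 2) →* G where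
  toFun a := z ^ (Multiplicative.toAdd a).val
  map_one' := by simp
  map_mul' a b := by
    show z ^ (Multiplicative.toAdd (a * b)).val = _
    rw [toAdd_mul, ZMod.val_add, ← pow_eq_pow_mod _ hz, pow_add]

lemma zmod_two_pow_self (n : ℕ) : (2 : ZMod (2 ^ n)) ^ n = 0 := by
  have h := ZMod.natCast_self (2 ^ n)
  push_cast at h
  exact h

lemma sd_val_sq (d : ℕ) (hd : 2 ≤ d) :
    ((2 : ZMod (2 ^ d)) ^ (d - 1) - 1) * ((2 : ZMod (2 ^ d)) ^ (d - 1) - 1) = 1 := by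
  have h0 : (2 : ZMod (2 ^ d)) ^ d = 0 := zmod_two_pow_self d
  have e1 : ((2 : ZMod (2 ^ d)) ^ (d - 1) - 1) * ((2 : ZMod (2 ^ d)) ^ (d - 1) - 1)
      = (2 : ZMod (2 ^ d)) ^ (d - 1) * (2 : ZMod (2 ^ d)) ^ (d - 1)
        - (2 : ZMod (2 ^ d)) * (2 : ZMod (2 ^ d)) ^ (d - 1) + 1 := by ring
  have e2 : (2 : ZMod (2 ^ d)) ^ (d - 1) * (2 : ZMod (2 ^ d)) ^ (d - 1)
      = (2 : ZMod (2 ^ d)) ^ (d - 2) * (2 : ZMod (2 ^ d)) ^ d := by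
    rw [← pow_add, ← pow_add]; congr 1; omega
  have e3 : (2 : ZMod (2 ^ d)) * (2 : ZMod (2 ^ d)) ^ (d - 1) = (2 : ZMod (2 ^ d)) ^ d := by
    rw [← pow_succ']; congr 1; omega
  rw [e1, e2, e3, h0, mul_zero, sub_zero, zero_add]

/-- The unit `2^(d-1) - 1` of `ZMod (2^d)`. -/
def sdUnit (d : ℕ) (hd : 2 ≤ d) : (ZMod (2 ^ d))ˣ :=
  ⟨(2 : ZMod (2 ^ d)) ^ (d - 1) - 1, (2 : ZMod (2 ^ d)) ^ (d - 1) - 1,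
    sd_val_sq d hd, sd_val_sq d hd⟩

lemma sdUnit_sq (d : ℕ) (hd : 2 ≤ d) : (sdUnit d hd) ^ 2 = 1 := by
  ext
  rw [Units.val_pow_eq_pow_val, Units.val_one, pow_two]
  exact sd_val_sq d hd

/-- The semidihedral group of order `2^(d+1)`:
`⟨x, y ∣ x^(2^d) = y² = 1, y x y⁻¹ = x^(2^(d-1) - 1)⟩`, realized as the semidirect
product of the cyclic group of order `2^d` by the cyclic group of order `2`, the
generator of the latter acting as multiplication by `2^(d-1) - 1`. -/
abbrev SemidihedralGroup (d : ℕ) (hd : 2 ≤ d) : Type :=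
  Multiplicative (ZMod (2 ^ d)) ⋊[(zmodUnitsToMulAut (2 ^ d)).comp
    (c2hom (sdUnit d hd) (sdUnit_sq d hd))] Multiplicative (ZMod 2)

/-- Group (a): the direct product `D_{2^d} × C₂`. -/
abbrev GroupA (d : ℕ) : Type := DihedralGroup (2 ^ (d - 1)) × Multiplicative (ZMod 2)

/-- The element `(s₁, c²)` of `D_{2^d} × C₄`, where `s₁` is the central involution of the
dihedral group and `c` generates `C₄`. -/
def cpGen (d : ℕ) : DihedralGroup (2 ^ (d - 1)) × Multiplicative (ZMod 4) :=
  (DihedralGroup.r ((2 ^ (d - 2) : ℕ) : ZMod (2 ^ (d - 1))), Multiplicative.ofAdd (2 : ZMod 4))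

lemma half_add_half (d : ℕ) :
    ((2 ^ (d - 2) : ℕ) : ZMod (2 ^ (d - 1))) + ((2 ^ (d - 2) : ℕ) : ZMod (2 ^ (d - 1))) = 0 := by
  match d with
  | 0 => decide
  | 1 => decide
  | (n + 2) =>
    show ((2 ^ n : ℕ) : ZMod (2 ^ (n + 1))) + ((2 ^ n : ℕ) : ZMod (2 ^ (n + 1))) = 0
    rw [← Nat.cast_add, show 2 ^ n + 2 ^ n = 2 ^ (n + 1) by ring, ZMod.natCast_self]

lemma cpGen_mem_center (d : ℕ) :
    cpGen d ∈ Subgroup.center (DihedralGroup (2 ^ (d - 1)) × Multiplicative (ZMod 4)) := by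
  rw [Subgroup.mem_center_iff]
  rintro ⟨g, c⟩
  refine Prod.ext ?_ (mul_comm _ _)
  show g * DihedralGroup.r _ = DihedralGroup.r _ * g
  have h := half_add_half d
  cases g with
  | r j => rw [DihedralGroup.r_mul_r, DihedralGroup.r_mul_r, add_comm]
  | sr j =>
    rw [DihedralGroup.sr_mul_r, DihedralGroup.r_mul_sr]
    congr 1
    rw [eq_comm, sub_eq_iff_eq_add, add_assoc, h, add_zero]

instance cpGen_zpowers_normal (d : ℕ) : (Subgroup.zpowers (cpGen d)).Normal := by
  constructor
  intro n hn g
  obtain ⟨k, rfl⟩ := hn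
  have hc : (cpGen d) ^ k ∈
      Subgroup.center (DihedralGroup (2 ^ (d - 1)) × Multiplicative (ZMod 4)) :=
    Subgroup.zpow_mem _ (cpGen_mem_center d) k
  have h := (Subgroup.mem_center_iff.mp hc) g
  have : g * (cpGen d) ^ k * g⁻¹ = (cpGen d) ^ k := by
    rw [h, mul_assoc, mul_inv_cancel, mul_one]
  rw [this]
  exact Subgroup.zpow_mem _ (Subgroup.mem_zpowers _) k

/-- Group (b): the central product `D_{2^d} ∘ C₄`, i.e. the quotient of `D_{2^d} × C₄`
by the order-2 subgroup generated by `(s₁, c²)`. -/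
abbrev GroupB (d : ℕ) : Type :=
  (DihedralGroup (2 ^ (d - 1)) × Multiplicative (ZMod 4)) ⧸ Subgroup.zpowers (cpGen d)

lemma ge_val_sq (d : ℕ) (hd : 3 ≤ d) :
    ((2 : ZMod (2 ^ (d - 1))) ^ (d - 2) + 1) * ((2 : ZMod (2 ^ (d - 1))) ^ (d - 2) + 1) = 1 := by
  have h0 : (2 : ZMod (2 ^ (d - 1))) ^ (d - 1) = 0 := zmod_two_pow_self (d - 1)
  have e1 : ((2 : ZMod (2 ^ (d - 1))) ^ (d - 2) + 1) * ((2 : ZMod (2 ^ (d - 1))) ^ (d - 2) + 1)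
      = (2 : ZMod (2 ^ (d - 1))) ^ (d - 2) * (2 : ZMod (2 ^ (d - 1))) ^ (d - 2)
        + (2 : ZMod (2 ^ (d - 1))) * (2 : ZMod (2 ^ (d - 1))) ^ (d - 2) + 1 := by ring
  have e2 : (2 : ZMod (2 ^ (d - 1))) ^ (d - 2) * (2 : ZMod (2 ^ (d - 1))) ^ (d - 2)
      = (2 : ZMod (2 ^ (d - 1))) ^ (d - 3) * (2 : ZMod (2 ^ (d - 1))) ^ (d - 1) := by
    rw [← pow_add, ← pow_add]; congr 1; omega
  have e3 : (2 : ZMod (2 ^ (d - 1))) * (2 : ZMod (2 ^ (d - 1))) ^ (d - 2)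
      = (2 : ZMod (2 ^ (d - 1))) ^ (d - 1) := by
    rw [← pow_succ']; congr 1; omega
  rw [e1, e2, e3, h0, mul_zero, add_zero, zero_add]

/-- The unit `2^(d-2) + 1` of `ZMod (2^(d-1))`. -/
def geUnit (d : ℕ) (hd : 3 ≤ d) : (ZMod (2 ^ (d - 1)))ˣ :=
  ⟨(2 : ZMod (2 ^ (d - 1))) ^ (d - 2) + 1, (2 : ZMod (2 ^ (d - 1))) ^ (d - 2) + 1,
    ge_val_sq d hd, ge_val_sq d hd⟩

lemma geUnit_sq (d : ℕ) (hd : 3 ≤ d) : (geUnit d hd) ^ 2 = 1 := by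
  ext
  rw [Units.val_pow_eq_pow_val, Units.val_one, pow_two]
  exact ge_val_sq d hd

/-- Group (e): the semidirect product
`C_{2^(d-1)} ⋊ (C₂ × C₂) = ⟨s, t, e ∣ s^(2^(d-1)) = t² = e² = 1, te = et,
t s t⁻¹ = s⁻¹, e s e⁻¹ = s^(2^(d-2)+1)⟩`,
the first `C₂` factor (generated by `t`) acting as inversion and the second (generated
by `e`) acting as multiplication by `2^(d-2) + 1`. -/
abbrev GroupE (d : ℕ) (hd : 3 ≤ d) : Type :=
  Multiplicative (ZMod (2 ^ (d - 1))) ⋊[(zmodUnitsToMulAut (2 ^ (d - 1))).comp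
    (MonoidHom.coprod (c2hom (-1 : (ZMod (2 ^ (d - 1)))ˣ) neg_one_sq)
      (c2hom (geUnit d hd) (geUnit_sq d hd)))]
    (Multiplicative (ZMod 2) × Multiplicative (ZMod 2))





-- instances for SemidirectProduct
def sdpEquivProd {N G : Type*} [Group N] [Group G] {φ : G →* MulAut N} :
    (N ⋊[φ] G) ≃ N × G where
  toFun x := (x.left, x.right)
  invFun p := ⟨p.1, p.2⟩
  left_inv x := rfl
  right_inv p := rfl

instance sdpDecEq {N G : Type*} [Group N] [Group G] {φ : G →* MulAut N}
    [DecidableEq N] [DecidableEq G] : DecidableEq (N ⋊[φ] G) :=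
  Equiv.decidableEq sdpEquivProd

instance sdpFintype {N G : Type*} [Group N] [Group G] {φ : G →* MulAut N}
    [Fintype N] [Fintype G] : Fintype (N ⋊[φ] G) :=
  Fintype.ofEquiv _ sdpEquivProd.symm

lemma cpGen_sq : (cpGen 3) ^ 2 = 1 := by decide

lemma mem_zpowers_cpGen_iff (x : DihedralGroup (2 ^ (3 - 1)) × Multiplicative (ZMod 4)) :
    x ∈ Subgroup.zpowers (cpGen 3) ↔ (x = 1 ∨ x = cpGen 3) := by
  constructor
  · rintro ⟨k, rfl⟩
    have h2 : ∀ m : ℤ, (cpGen 3) ^ (2 * m) = 1 := by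
      intro m
      rw [zpow_mul, show ((2:ℤ)) = ((2:ℕ):ℤ) from rfl, zpow_natCast, cpGen_sq, one_zpow]
    rcases Int.even_or_odd k with ⟨m, hm⟩ | ⟨m, hm⟩
    · left
      subst hm
      show (cpGen 3) ^ (m + m) = 1
      rw [show m + m = 2 * m by ring]
      exact h2 m
    · right
      subst hm
      show (cpGen 3) ^ (2 * m + 1) = cpGen 3
      rw [zpow_add, h2, one_mul, zpow_one]
  · rintro (rfl | rfl)
    · exact Subgroup.one_mem _
    · exact Subgroup.mem_zpowers _

instance zpowersCpGenDec : DecidablePred (· ∈ Subgroup.zpowers (cpGen 3)) :=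
  fun x => decidable_of_iff _ (mem_zpowers_cpGen_iff x).symm

instance (priority := 5000) groupBRelDec :
    DecidableRel (QuotientGroup.leftRel (Subgroup.zpowers (cpGen 3))).r :=
  fun x y => decidable_of_iff (x⁻¹ * y ∈ Subgroup.zpowers (cpGen 3))
    (QuotientGroup.leftRel_apply).symm

instance (priority := 5000) groupBDecEq : DecidableEq (GroupB 3) :=
  @Quotient.decidableEq _ _ groupBRelDec

instance groupBFintype : Fintype (GroupB 3) :=
  @Quotient.fintype _ _ _ groupBRelDec

set_option maxRecDepth 40000

example : Fintype.card {x : GroupA 3 // x * x = 1} = 12 := by decide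
example : Fintype.card {x : DihedralGroup 8 // x * x = 1} = 10 := by decide
example : Fintype.card {x : SemidihedralGroup 3 (by norm_num) // x * x = 1} = 6 := by decide
example : Fintype.card {x : GroupB 3 // x * x = 1} = 8 := by decide

lemma card_sq_congr {G H : Type*} [Group G] [Group H] [Fintype G] [Fintype H]
    [DecidableEq G] [DecidableEq H] (e : G ≃* H) :
    Fintype.card {x : G // x * x = 1} = Fintype.card {y : H // y * y = 1} :=
  Fintype.card_congr (e.toEquiv.subtypeEquiv fun x => by
    rw [show e.toEquiv x = e x from rfl, ← map_mul]
    exact ⟨fun h => by rw [h, map_one], fun h => e.injective (by rw [map_one e]; exact h)⟩)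

set_option maxRecDepth 40000 in
lemma noniso_all :
    (IsEmpty (GroupA 3 ≃* GroupB 3) ∧
     IsEmpty (GroupA 3 ≃* DihedralGroup 8) ∧
     IsEmpty (GroupA 3 ≃* SemidihedralGroup 3 (by norm_num)) ∧
     IsEmpty (GroupB 3 ≃* DihedralGroup 8) ∧
     IsEmpty (GroupB 3 ≃* SemidihedralGroup 3 (by norm_num)) ∧
     IsEmpty (DihedralGroup 8 ≃* SemidihedralGroup 3 (by norm_num))) := by
  have hA : Fintype.card {x : GroupA 3 // x * x = 1} = 12 := by decide
  have hB : Fintype.card {x : GroupB 3 // x * x = 1} = 8 := by decide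
  have hD : Fintype.card {x : DihedralGroup 8 // x * x = 1} = 10 := by decide
  have hS : Fintype.card {x : SemidihedralGroup 3 (by norm_num) // x * x = 1} = 6 := by decide
  refine ⟨⟨fun e => ?_⟩, ⟨fun e => ?_⟩, ⟨fun e => ?_⟩, ⟨fun e => ?_⟩, ⟨fun e => ?_⟩, ⟨fun e => ?_⟩⟩ <;>
    have := card_sq_congr e <;> omega

-- ===== general helpers =====

theorem normal_of_index_two' {G : Type*} [Group G] {H : Subgroup G} (h : H.index = 2) :
    H.Normal := by
  constructor
  intro n hn g
  have h1 := Subgroup.mul_mem_iff_of_index_two h (a := g * n) (b := g⁻¹)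
  have h2 := Subgroup.mul_mem_iff_of_index_two h (a := g) (b := n)
  rw [mul_assoc] at h1 ⊢
  rw [h1, h2]
  simp [hn]

theorem mem_of_notmem_notmem {G : Type*} [Group G] {H : Subgroup G} (h : H.index = 2)
    {a b : G} (ha : a ∉ H) (hb : b ∉ H) : a * b⁻¹ ∈ H := by
  rw [Subgroup.mul_mem_iff_of_index_two h]
  simp [ha, hb]

/-- hom from the cyclic group `ZMod n` determined by an element of order dividing `n` -/
def cnhom' {G : Type*} [Group G] (n : ℕ) [NeZero n] (z : G) (hz : z ^ n = 1) :
    Multiplicative (ZMod n) →* G where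
  toFun a := z ^ (Multiplicative.toAdd a).val
  map_one' := by simp
  map_mul' a b := by
    show z ^ (Multiplicative.toAdd (a * b)).val = _
    rw [toAdd_mul, ZMod.val_add, ← pow_eq_pow_mod _ hz, pow_add]

lemma cnhom'_natCast {G : Type*} [Group G] (n : ℕ) [NeZero n] (z : G) (hz : z ^ n = 1)
    (k : ℕ) : cnhom' n z hz (Multiplicative.ofAdd ((k : ZMod n))) = z ^ k := by
  show z ^ (ZMod.val ((k : ℕ) : ZMod n)) = z ^ k
  rw [ZMod.val_natCast, ← pow_eq_pow_mod _ hz]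

lemma r_eq_pow {n : ℕ} [NeZero n] (i : ZMod n) :
    (DihedralGroup.r i : DihedralGroup n) = (DihedralGroup.r 1) ^ i.val := by
  rw [DihedralGroup.r_one_pow, ZMod.natCast_rightInverse i]

lemma sr_eq {n : ℕ} (i : ZMod n) :
    (DihedralGroup.sr i : DihedralGroup n) = DihedralGroup.sr 0 * DihedralGroup.r i := by
  rw [DihedralGroup.sr_mul_r, zero_add]

section DLift
open Multiplicative
variable {G : Type*} [Group G] (n : ℕ) [NeZero n] (a b : G)
    (ha : a ^ n = 1) (hb : b * b = 1) (hab : b * a * b = a⁻¹)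

include hb hab in
lemma dl_key : ∀ x : Multiplicative (ZMod n), b * (cnhom' n a ha) x = (cnhom' n a ha) x⁻¹ * b := by
  have hbinv : b⁻¹ = b := inv_eq_of_mul_eq_one_right hb
  have hconj : ∀ k : ℕ, b * a ^ k * b = (a ^ k)⁻¹ := by
    intro k
    have h1 : (MulAut.conj b) (a ^ k) = ((MulAut.conj b) a) ^ k := map_pow _ _ _
    simp only [MulAut.conj_apply, hbinv] at h1
    rw [h1, hab, inv_pow]
  intro x
  have h2 := hconj (Multiplicative.toAdd x).val
  show b * a ^ (Multiplicative.toAdd x).val = (cnhom' n a ha) x⁻¹ * b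
  have h3 : (cnhom' n a ha) x⁻¹ = ((cnhom' n a ha) x)⁻¹ := map_inv _ _
  rw [h3]
  show b * a ^ (Multiplicative.toAdd x).val = (a ^ (Multiplicative.toAdd x).val)⁻¹ * b
  rw [← h2, mul_assoc, hb, mul_one]

/-- Universal property of dihedral groups. -/
def dihedralLift (hb : b * b = 1) (hab : b * a * b = a⁻¹) : DihedralGroup n →* G where
  toFun x := match x with
    | .r i => cnhom' n a ha (ofAdd i)
    | .sr i => b * cnhom' n a ha (ofAdd i)
  map_one' := by
    show cnhom' n a ha (ofAdd 0) = 1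
    simp
  map_mul' x y := by
    have key := dl_key n a b ha hb hab
    have key' : ∀ x : Multiplicative (ZMod n),
        (cnhom' n a ha) x * b = b * (cnhom' n a ha) x⁻¹ := by
      intro x
      rw [key x⁻¹, inv_inv]
    have hsub : ∀ i j : ZMod n, (ofAdd (j - i) : Multiplicative (ZMod n))
        = (ofAdd i)⁻¹ * ofAdd j := by
      intro i j
      rw [← ofAdd_neg, ← ofAdd_add]
      congr 1
      ring
    cases x with
    | r i =>
      cases y with
      | r j =>
        show cnhom' n a ha (ofAdd (i + j)) = _
        rw [← map_mul, ← ofAdd_add]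
      | sr j =>
        show b * cnhom' n a ha (ofAdd (j - i)) = cnhom' n a ha (ofAdd i) * (b * cnhom' n a ha (ofAdd j))
        rw [← mul_assoc, key' (ofAdd i), mul_assoc, ← map_mul, hsub]
    | sr i =>
      cases y with
      | r j =>
        show b * cnhom' n a ha (ofAdd (i + j)) = b * cnhom' n a ha (ofAdd i) * cnhom' n a ha (ofAdd j)
        rw [mul_assoc, ← map_mul, ← ofAdd_add]
      | sr j =>
        show cnhom' n a ha (ofAdd (j - i)) = (b * cnhom' n a ha (ofAdd i)) * (b * cnhom' n a ha (ofAdd j))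
        rw [mul_assoc, ← mul_assoc (cnhom' n a ha (ofAdd i)), key' (ofAdd i), ← mul_assoc, ← mul_assoc, hb,
          one_mul, ← map_mul, hsub]

lemma dihedralLift_r (hb : b * b = 1) (hab : b * a * b = a⁻¹) (i : ZMod n) :
    dihedralLift n a b ha hb hab (.r i) = cnhom' n a ha (ofAdd i) := rfl

lemma dihedralLift_sr (hb : b * b = 1) (hab : b * a * b = a⁻¹) (i : ZMod n) :
    dihedralLift n a b ha hb hab (.sr i) = b * cnhom' n a ha (ofAdd i) := rfl

end DLift

-- ===== classification =====

section Classify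
open Multiplicative

variable {E : Type*} [Group E] [Finite E] {D : Subgroup E} (hDindex : D.index = 2)
  (ψ : DihedralGroup 4 →* E) (hinj : Function.Injective ψ)
  (hsurjD : ∀ e ∈ D, ∃ x, ψ x = e)
  (hcardE : Nat.card E = 16)
  {w : E} (hw : w ∉ D)

include hDindex hinj hsurjD hcardE hw in
lemma lemA (hws : w * ψ (.r 1) = ψ (.r 1) * w) (hwt : w * ψ (.sr 0) = ψ (.sr 0) * w) :
    Nonempty (E ≃* GroupA 3) ∨ Nonempty (E ≃* GroupB 3) := by
  have hcomm : ∀ m : DihedralGroup 4, Commute (ψ m) w := by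
    intro m
    cases m with
    | r i =>
      rw [r_eq_pow i, map_pow]
      exact ((Commute.symm hws).pow_left _)
    | sr i =>
      rw [sr_eq i, map_mul]
      exact Commute.mul_left (Commute.symm hwt)
        (by rw [r_eq_pow i, map_pow]; exact (Commute.symm hws).pow_left _)
  obtain ⟨z, hz⟩ := hsurjD (w * w) (Subgroup.mul_self_mem_of_index_two hDindex w)
  have hzz : ∀ m : DihedralGroup 4, m * DihedralGroup.r 1 = DihedralGroup.r 1 * m →
      m * DihedralGroup.sr 0 = DihedralGroup.sr 0 * m →
      m = 1 ∨ m = DihedralGroup.r 2 := by decide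
  have hz1 : z * DihedralGroup.r 1 = DihedralGroup.r 1 * z := by
    apply hinj
    rw [map_mul, map_mul, hz]
    exact (((hcomm _).mul_right (hcomm _)).symm : Commute (w*w) (ψ (.r 1))).eq
  have hz2 : z * DihedralGroup.sr 0 = DihedralGroup.sr 0 * z := by
    apply hinj
    rw [map_mul, map_mul, hz]
    exact (((hcomm _).mul_right (hcomm _)).symm : Commute (w*w) (ψ (.sr 0))).eq
  rcases hzz z hz1 hz2 with rfl | rfl
  · -- w^2 = 1, direct product
    left
    have hw2 : w ^ 2 = 1 := by rw [pow_two, ← hz, map_one]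
    have hcomm2 : ∀ m n, Commute (ψ m) ((cnhom' 2 w hw2) n) := fun m n =>
      (hcomm m).pow_right _
    set F : GroupA 3 →* E := MonoidHom.noncommCoprod ψ (cnhom' 2 w hw2) hcomm2 with hF
    have hFsurj : Function.Surjective F := by
      intro e
      by_cases he : e ∈ D
      · obtain ⟨x, hx⟩ := hsurjD e he
        refine ⟨(x, 1), ?_⟩
        show ψ x * (cnhom' 2 w hw2) 1 = e
        rw [map_one, mul_one, hx]
      · obtain ⟨x, hx⟩ := hsurjD (e * w⁻¹) (mem_of_notmem_notmem hDindex he hw)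
        refine ⟨(x, ofAdd 1), ?_⟩
        show ψ x * (cnhom' 2 w hw2) (ofAdd 1) = e
        have h1 : (cnhom' 2 w hw2) (ofAdd 1) = w := pow_one w
        rw [h1, hx, inv_mul_cancel_right]
    have hcardA : Nat.card (GroupA 3) = 16 := by
      rw [Nat.card_prod, DihedralGroup.nat_card]
      have h2 : Nat.card (Multiplicative (ZMod 2)) = 2 := by
        rw [Nat.card_eq_fintype_card]; decide
      rw [h2]
      norm_num
    have hbij : Function.Bijective F :=
      (Nat.bijective_iff_surjective_and_card F).mpr ⟨hFsurj, by rw [hcardA, hcardE]⟩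
    exact ⟨(MulEquiv.ofBijective F hbij).symm⟩
  · -- w^2 = s^2, central product
    right
    have hr22 : (DihedralGroup.r 2 * DihedralGroup.r 2 : DihedralGroup 4) = 1 := by decide
    have hw4 : w ^ 4 = 1 := by
      calc w ^ 4 = (w * w) * (w * w) := by
            rw [show (4:ℕ) = 2 + 2 from rfl, pow_add, pow_two]
        _ = ψ (DihedralGroup.r 2) * ψ (DihedralGroup.r 2) := by rw [hz]
        _ = ψ (DihedralGroup.r 2 * DihedralGroup.r 2) := (map_mul ψ _ _).symm
        _ = 1 := by rw [hr22, map_one]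
    have hcomm4 : ∀ m n, Commute (ψ m) ((cnhom' 4 w hw4) n) := fun m n =>
      (hcomm m).pow_right _
    set F₀ : DihedralGroup (2 ^ (3-1)) × Multiplicative (ZMod 4) →* E := MonoidHom.noncommCoprod ψ (cnhom' 4 w hw4) hcomm4 with hF₀
    have hF₀g : F₀ (cpGen 3) = 1 := by
      show ψ (DihedralGroup.r ((2:ℕ) : ZMod 4)) * w ^ (ZMod.val (Multiplicative.toAdd (Multiplicative.ofAdd (2 : ZMod 4)))) = 1
      have hval : ZMod.val (Multiplicative.toAdd (Multiplicative.ofAdd (2 : ZMod 4))) = 2 := rfl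
      have hcast : ((2:ℕ) : ZMod 4) = (2 : ZMod 4) := by norm_num
      rw [hval, hcast, pow_two, ← hz, ← map_mul, hr22, map_one]
    have hker : Subgroup.zpowers (cpGen 3) ≤ F₀.ker := by
      intro x hx
      obtain ⟨k, rfl⟩ := hx
      rw [MonoidHom.mem_ker, map_zpow, hF₀g, one_zpow]
    have hF₀surj : Function.Surjective F₀ := by
      intro e
      by_cases he : e ∈ D
      · obtain ⟨x, hx⟩ := hsurjD e he
        refine ⟨(x, 1), ?_⟩
        show ψ x * (cnhom' 4 w hw4) 1 = e
        rw [map_one, mul_one, hx]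
      · obtain ⟨x, hx⟩ := hsurjD (e * w⁻¹) (mem_of_notmem_notmem hDindex he hw)
        refine ⟨(x, ofAdd 1), ?_⟩
        show ψ x * (cnhom' 4 w hw4) (ofAdd 1) = e
        have h1 : (cnhom' 4 w hw4) (ofAdd 1) = w := pow_one w
        rw [h1, hx, inv_mul_cancel_right]
    set F : GroupB 3 →* E := QuotientGroup.lift _ F₀ hker with hFq
    have hFsurj : Function.Surjective F := by
      intro e
      obtain ⟨x, hx⟩ := hF₀surj e
      exact ⟨QuotientGroup.mk x, by rwa [hFq, QuotientGroup.lift_mk]⟩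
    have hgord : orderOf (cpGen 3) = 2 := by
      apply orderOf_eq_prime
      · decide
      · decide
    have hcardprod : Nat.card (DihedralGroup (2 ^ (3-1)) × Multiplicative (ZMod 4)) = 32 := by
      rw [Nat.card_prod, DihedralGroup.nat_card]
      have h4 : Nat.card (Multiplicative (ZMod 4)) = 4 := by
        rw [Nat.card_eq_fintype_card]; decide
      rw [h4]
      norm_num
    have hcardB : Nat.card (GroupB 3) = 16 := by
      have h1 := Subgroup.card_mul_index (Subgroup.zpowers (cpGen 3))
      rw [Nat.card_zpowers, hgord, hcardprod] at h1
      rw [show Nat.card (GroupB 3) = (Subgroup.zpowers (cpGen 3)).index from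
        (Subgroup.index_eq_card _).symm]
      omega
    have hbij : Function.Bijective F :=
      (Nat.bijective_iff_surjective_and_card F).mpr ⟨hFsurj, by rw [hcardB, hcardE]⟩
    exact ⟨(MulEquiv.ofBijective F hbij).symm⟩

end Classify

section ClassifyB
open Multiplicative

variable {E : Type*} [Group E] [Finite E] {D : Subgroup E} (hDindex : D.index = 2)
  (ψ : DihedralGroup 4 →* E) (hinj : Function.Injective ψ)
  (hsurjD : ∀ e ∈ D, ∃ x, ψ x = e)
  (hcardE : Nat.card E = 16)
  {w : E} (hw : w ∉ D)

include hDindex hinj hsurjD hcardE hw in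
lemma lemB (hws : w * ψ (.r 1) = ψ (.r 1) * w) (hwt : w * ψ (.sr 0) = ψ (.sr 1) * w) :
    Nonempty (E ≃* DihedralGroup 8) ∨ Nonempty (E ≃* SemidihedralGroup 3 (by norm_num)) := by
  have hsr1 : (DihedralGroup.sr 1 : DihedralGroup 4) = DihedralGroup.sr 0 * DihedralGroup.r 1 := by
    decide
  obtain ⟨z, hz⟩ := hsurjD (w * w) (Subgroup.mul_self_mem_of_index_two hDindex w)
  have hcs : Commute (ψ (.r 1)) w := Commute.symm hws
  have hz1 : z * DihedralGroup.r 1 = DihedralGroup.r 1 * z := by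
    apply hinj
    rw [map_mul, map_mul, hz]
    exact ((hcs.mul_right hcs).symm : Commute (w*w) (ψ (.r 1))).eq
  have hconj2 : (w * w) * ψ (.sr 0) * (w * w)⁻¹ = ψ (.sr 2) := by
    have h1 : w * ψ (.sr 0) * w⁻¹ = ψ (.sr 1) := by
      rw [hwt, mul_inv_cancel_right]
    have h2 : w * ψ (.r 1) * w⁻¹ = ψ (.r 1) := by
      rw [hws, mul_inv_cancel_right]
    have h3 : w * ψ (.sr 1) * w⁻¹ = ψ (.sr 2) := by
      rw [hsr1, map_mul]
      calc w * (ψ (.sr 0) * ψ (.r 1)) * w⁻¹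
          = (w * ψ (.sr 0) * w⁻¹) * (w * ψ (.r 1) * w⁻¹) := by group
        _ = ψ (.sr 1) * ψ (.r 1) := by rw [h1, h2]
        _ = ψ (.sr 2) := by rw [← map_mul]; exact congrArg ψ (by decide)
    calc (w * w) * ψ (.sr 0) * (w * w)⁻¹
        = w * (w * ψ (.sr 0) * w⁻¹) * w⁻¹ := by group
      _ = w * ψ (.sr 1) * w⁻¹ := by rw [h1]
      _ = ψ (.sr 2) := h3
  have hz2 : z * DihedralGroup.sr 0 * z⁻¹ = DihedralGroup.sr 2 := by
    apply hinj
    rw [map_mul, map_mul, map_inv, hz]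
    exact hconj2
  have hzz : ∀ m : DihedralGroup 4, m * DihedralGroup.r 1 = DihedralGroup.r 1 * m →
      m * DihedralGroup.sr 0 * m⁻¹ = DihedralGroup.sr 2 →
      m = DihedralGroup.r 1 ∨ m = DihedralGroup.r 3 := by decide
  have ht2 : ψ (.sr 0) * ψ (.sr 0) = 1 := by
    rw [← map_mul, show (DihedralGroup.sr 0 * DihedralGroup.sr 0 : DihedralGroup 4) = 1 by decide,
      map_one]
  have htinv : (ψ (.sr 0))⁻¹ = ψ (.sr 0) := inv_eq_of_mul_eq_one_right ht2
  rcases hzz z hz1 hz2 with rfl | rfl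
  · -- w² = s : semidihedral
    right
    have hw8 : w ^ 8 = 1 := by
      have h1 : ((DihedralGroup.r 1 : DihedralGroup 4)) ^ 4 = 1 := by decide
      calc w ^ 8 = (w * w) ^ 4 := by rw [← pow_two, ← pow_mul]
        _ = ψ (.r 1) ^ 4 := by rw [hz]
        _ = ψ ((DihedralGroup.r 1) ^ 4) := (map_pow ψ _ _).symm
        _ = 1 := by rw [h1, map_one]
    have hwt' : w * ψ (.sr 0) = ψ (.sr 0) * w ^ 3 := by
      rw [hwt, hsr1, map_mul, hz, pow_succ, pow_two, mul_assoc]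
    have trel : ψ (.sr 0) * w * ψ (.sr 0) = w ^ 3 := by
      calc ψ (.sr 0) * w * ψ (.sr 0)
          = ψ (.sr 0) * (w * ψ (.sr 0)) := by group
        _ = ψ (.sr 0) * (ψ (.sr 0) * w ^ 3) := by rw [hwt']
        _ = (ψ (.sr 0) * ψ (.sr 0)) * w ^ 3 := by group
        _ = w ^ 3 := by rw [ht2, one_mul]
    have htw : ψ (.sr 0) * w = w ^ 3 * ψ (.sr 0) := by
      rw [← trel]
      calc ψ (.sr 0) * w = ψ (.sr 0) * w * (ψ (.sr 0) * ψ (.sr 0)) := by rw [ht2, mul_one]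
        _ = ψ (.sr 0) * w * ψ (.sr 0) * ψ (.sr 0) := by group
    have tmove : ∀ k : ℕ, ψ (.sr 0) * w ^ k = w ^ (3 * k) * ψ (.sr 0) := by
      intro k
      induction k with
      | zero => simp
      | succ m ih =>
        calc ψ (.sr 0) * w ^ (m + 1) = (ψ (.sr 0) * w ^ m) * w := by rw [pow_succ]; group
          _ = w ^ (3 * m) * (ψ (.sr 0) * w) := by rw [ih]; group
          _ = w ^ (3 * m) * (w ^ 3 * ψ (.sr 0)) := by rw [htw]
          _ = w ^ (3 * (m + 1)) * ψ (.sr 0) := by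
              rw [show 3 * (m + 1) = 3 * m + 3 by ring, pow_add]; group
    have ht2' : ψ (.sr 0) ^ 2 = 1 := by rwa [pow_two]
    set f₁ : Multiplicative (ZMod (2 ^ 3)) →* E := cnhom' (2 ^ 3) w hw8 with hf₁
    set f₂ : Multiplicative (ZMod 2) →* E := c2hom (ψ (.sr 0)) ht2' with hf₂
    have hcompat : ∀ g : Multiplicative (ZMod 2),
        f₁.comp (((zmodUnitsToMulAut (2 ^ 3)).comp
          (c2hom (sdUnit 3 (by norm_num)) (sdUnit_sq 3 (by norm_num)))) g).toMonoidHom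
          = (MulAut.conj (f₂ g)).toMonoidHom.comp f₁ := by
      intro g
      have hg : g = 1 ∨ g = ofAdd 1 := by revert g; decide
      ext x
      rcases hg with rfl | rfl
      · simp
      · show f₁ ((zmodUnitsToMulAut (2 ^ 3)) ((sdUnit 3 (by norm_num)) ^ (ZMod.val (1 : ZMod 2))) x)
            = (MulAut.conj (f₂ (ofAdd 1))) (f₁ x)
        have hval1 : ZMod.val (1 : ZMod 2) = 1 := rfl
        rw [hval1, pow_one]
        have hact : (zmodUnitsToMulAut (2 ^ 3)) (sdUnit 3 (by norm_num)) x
            = ofAdd ((3 : ZMod (2 ^ 3)) * Multiplicative.toAdd (α := ZMod (2 ^ 3)) x) := by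
          show ofAdd ((sdUnit 3 (by norm_num)) • Multiplicative.toAdd (α := ZMod (2 ^ 3)) x) = _
          rw [Units.smul_def]
          congr 1
        rw [hact]
        have hf2 : f₂ (ofAdd 1) = ψ (.sr 0) := by
          show ψ (.sr 0) ^ (ZMod.val (1 : ZMod 2)) = ψ (.sr 0)
          rw [hval1, pow_one]
        show w ^ (ZMod.val ((3 : ZMod (2 ^ 3)) * Multiplicative.toAdd (α := ZMod (2 ^ 3)) x))
            = (MulAut.conj (f₂ (ofAdd 1))) (w ^ (ZMod.val (Multiplicative.toAdd (α := ZMod (2 ^ 3)) x)))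
        rw [hf2, MulAut.conj_apply, htinv]
        calc w ^ (ZMod.val ((3 : ZMod (2 ^ 3)) * Multiplicative.toAdd (α := ZMod (2 ^ 3)) x))
            = w ^ ((3 * ZMod.val (Multiplicative.toAdd (α := ZMod (2 ^ 3)) x)) % (2 ^ 3)) := by
              rw [ZMod.val_mul, show ZMod.val (3 : ZMod (2 ^ 3)) = 3 from rfl]
          _ = w ^ (3 * ZMod.val (Multiplicative.toAdd (α := ZMod (2 ^ 3)) x)) := by
              have hw8' : w ^ (2 ^ 3) = 1 := hw8
              rw [← pow_eq_pow_mod _ hw8']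
          _ = ψ (.sr 0) * w ^ (ZMod.val (Multiplicative.toAdd (α := ZMod (2 ^ 3)) x)) * ψ (.sr 0) := by
              rw [tmove, mul_assoc, ht2, mul_one]
    set F : SemidihedralGroup 3 (by norm_num) →* E := SemidirectProduct.lift f₁ f₂ hcompat with hF
    have happ : ∀ (n : Multiplicative (ZMod (2 ^ 3))) (g : Multiplicative (ZMod 2)),
        F ⟨n, g⟩ = f₁ n * f₂ g := fun n g => rfl
    have hf1 : ∀ k : ℕ, f₁ (ofAdd ((k : ZMod (2 ^ 3)))) = w ^ k := fun k =>
      cnhom'_natCast _ w hw8 k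
    have hf2one : f₂ (ofAdd 1) = ψ (.sr 0) := by
      show ψ (.sr 0) ^ (ZMod.val (1 : ZMod 2)) = ψ (.sr 0)
      rw [show ZMod.val (1 : ZMod 2) = 1 from rfl, pow_one]
    have hψr : ∀ i : ZMod 4, ψ (.r i) = w ^ (2 * i.val) := by
      intro i
      rw [r_eq_pow i, map_pow, hz, ← pow_two, ← pow_mul]
    have hψsr : ∀ i : ZMod 4, ψ (.sr i) = w ^ (6 * i.val) * ψ (.sr 0) := by
      intro i
      rw [sr_eq i, map_mul, hψr i, tmove (2 * i.val),
        show 3 * (2 * i.val) = 6 * i.val by ring]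
    have hFsurj : Function.Surjective F := by
      intro e
      by_cases he : e ∈ D
      · obtain ⟨x, hx⟩ := hsurjD e he
        cases x with
        | r i =>
          refine ⟨⟨ofAdd ((2 * i.val : ℕ) : ZMod (2 ^ 3)), 1⟩, ?_⟩
          rw [happ, map_one, mul_one, hf1, ← hψr, hx]
        | sr i =>
          refine ⟨⟨ofAdd ((6 * i.val : ℕ) : ZMod (2 ^ 3)), ofAdd 1⟩, ?_⟩
          rw [happ, hf1, hf2one, ← hψsr, hx]
      · obtain ⟨x, hx⟩ := hsurjD (e * w⁻¹) (mem_of_notmem_notmem hDindex he hw)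
        have hxe : ψ x * w = e := by rw [hx, inv_mul_cancel_right]
        cases x with
        | r i =>
          refine ⟨⟨ofAdd ((2 * i.val + 1 : ℕ) : ZMod (2 ^ 3)), 1⟩, ?_⟩
          rw [happ, map_one, mul_one, hf1, pow_succ, ← hψr, hxe]
        | sr i =>
          refine ⟨⟨ofAdd ((6 * i.val + 3 : ℕ) : ZMod (2 ^ 3)), ofAdd 1⟩, ?_⟩
          rw [happ, hf1, hf2one, ← hxe, hψsr i]
          calc w ^ (6 * i.val + 3) * ψ (.sr 0)
              = w ^ (6 * i.val) * (w ^ 3 * ψ (.sr 0)) := by rw [pow_add]; group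
            _ = w ^ (6 * i.val) * (ψ (.sr 0) * w) := by rw [← htw]
            _ = w ^ (6 * i.val) * ψ (.sr 0) * w := by group
    have hcardS : Nat.card (SemidihedralGroup 3 (by norm_num)) = 16 := by
      rw [Nat.card_congr sdpEquivProd, Nat.card_prod]
      have h8 : Nat.card (Multiplicative (ZMod (2 ^ 3))) = 8 := by
        rw [Nat.card_eq_fintype_card]; decide
      have h2 : Nat.card (Multiplicative (ZMod 2)) = 2 := by
        rw [Nat.card_eq_fintype_card]; decide
      rw [h8, h2]
    have hbij : Function.Bijective F :=
      (Nat.bijective_iff_surjective_and_card F).mpr ⟨hFsurj, by rw [hcardS, hcardE]⟩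
    exact ⟨(MulEquiv.ofBijective F hbij).symm⟩
  · -- w² = s³ : dihedral
    left
    have hw8 : w ^ 8 = 1 := by
      have h1 : ((DihedralGroup.r 3 : DihedralGroup 4)) ^ 4 = 1 := by decide
      calc w ^ 8 = (w * w) ^ 4 := by rw [← pow_two, ← pow_mul]
        _ = ψ (.r 3) ^ 4 := by rw [hz]
        _ = ψ ((DihedralGroup.r 3) ^ 4) := (map_pow ψ _ _).symm
        _ = 1 := by rw [h1, map_one]
    have hs_inv : ψ (.r 1) = (w * w)⁻¹ := by
      have h1 : (DihedralGroup.r 3 * DihedralGroup.r 1 : DihedralGroup 4) = 1 := by decide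
      have h2 : ψ (.r 3) * ψ (.r 1) = 1 := by rw [← map_mul, h1, map_one]
      rw [hz] at h2
      exact (inv_eq_of_mul_eq_one_right h2).symm
    have hs6 : ψ (.r 1) = w ^ 6 := by
      have h1 : w ^ 6 * (w * w) = 1 := by rw [← pow_two, ← pow_add]; exact hw8
      rw [hs_inv]
      exact (eq_inv_of_mul_eq_one_left h1).symm
    have hwt' : w * ψ (.sr 0) = ψ (.sr 0) * w⁻¹ := by
      rw [hwt, hsr1, map_mul, hs_inv]
      group
    have trel : ψ (.sr 0) * w * ψ (.sr 0) = w⁻¹ := by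
      calc ψ (.sr 0) * w * ψ (.sr 0)
          = ψ (.sr 0) * (w * ψ (.sr 0)) := by group
        _ = ψ (.sr 0) * (ψ (.sr 0) * w⁻¹) := by rw [hwt']
        _ = w⁻¹ := by rw [← mul_assoc, ht2, one_mul]
    set F : DihedralGroup 8 →* E := dihedralLift 8 w (ψ (.sr 0)) hw8 ht2 trel with hF
    have hFr : ∀ k : ℕ, F (.r ((k : ZMod 8))) = w ^ k := fun k =>
      cnhom'_natCast 8 w hw8 k
    have hFsr : ∀ k : ℕ, F (.sr ((k : ZMod 8))) = ψ (.sr 0) * w ^ k := by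
      intro k
      show ψ (.sr 0) * cnhom' 8 w hw8 (ofAdd ((k : ZMod 8))) = ψ (.sr 0) * w ^ k
      rw [cnhom'_natCast 8 w hw8 k]
    have hψr6 : ∀ i : ZMod 4, ψ (.r i) = w ^ (6 * i.val) := by
      intro i
      rw [r_eq_pow i, map_pow, hs6, ← pow_mul]
    have hψsr6 : ∀ i : ZMod 4, ψ (.sr i) = ψ (.sr 0) * w ^ (6 * i.val) := by
      intro i
      rw [sr_eq i, map_mul, hψr6]
    have hFsurj : Function.Surjective F := by
      intro e
      by_cases he : e ∈ D
      · obtain ⟨x, hx⟩ := hsurjD e he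
        cases x with
        | r i =>
          refine ⟨.r ((6 * i.val : ℕ) : ZMod 8), ?_⟩
          rw [hFr, ← hψr6, hx]
        | sr i =>
          refine ⟨.sr ((6 * i.val : ℕ) : ZMod 8), ?_⟩
          rw [hFsr, ← hψsr6, hx]
      · obtain ⟨x, hx⟩ := hsurjD (e * w⁻¹) (mem_of_notmem_notmem hDindex he hw)
        have hxe : ψ x * w = e := by rw [hx, inv_mul_cancel_right]
        cases x with
        | r i =>
          refine ⟨.r ((6 * i.val + 1 : ℕ) : ZMod 8), ?_⟩
          rw [hFr, pow_succ, ← hψr6, hxe]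
        | sr i =>
          refine ⟨.sr ((6 * i.val + 1 : ℕ) : ZMod 8), ?_⟩
          rw [hFsr, pow_succ, ← mul_assoc, ← hψsr6, hxe]
    have hcardD : Nat.card (DihedralGroup 8) = 16 := by
      rw [DihedralGroup.nat_card]
    have hbij : Function.Bijective F :=
      (Nat.bijective_iff_surjective_and_card F).mpr ⟨hFsurj, by rw [hcardD, hcardE]⟩
    exact ⟨(MulEquiv.ofBijective F hbij).symm⟩

end ClassifyB

section Master
open Multiplicative

theorem classify_main (E : Type*) [Group E] [Finite E]
    (D : Subgroup E) (hDindex : D.index = 2)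
    (φ : D ≃* DihedralGroup 4) :
    Nonempty (E ≃* GroupA 3) ∨
    Nonempty (E ≃* GroupB 3) ∨
    Nonempty (E ≃* DihedralGroup 8) ∨
    Nonempty (E ≃* SemidihedralGroup 3 (by norm_num)) := by
  have hN : D.Normal := normal_of_index_two' hDindex
  set ψ : DihedralGroup 4 →* E := D.subtype.comp φ.symm.toMonoidHom with hψ
  have hinj : Function.Injective ψ :=
    (Subgroup.subtype_injective D).comp φ.symm.injective
  have hsurjD : ∀ e ∈ D, ∃ x, ψ x = e := by
    intro e he
    exact ⟨φ ⟨e, he⟩, by simp [hψ]⟩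
  have hcardE : Nat.card E = 16 := by
    have hD8 : Nat.card D = 8 := by
      rw [Nat.card_congr φ.toEquiv, DihedralGroup.nat_card]
    have h := Subgroup.card_mul_index D
    rw [hD8, hDindex] at h
    omega
  -- pick w ∉ D
  have hDne : ∃ w : E, w ∉ D := by
    by_contra hcon
    push_neg at hcon
    have : D = ⊤ := (Subgroup.eq_top_iff' D).mpr hcon
    rw [this, Subgroup.index_top] at hDindex
    omega
  obtain ⟨w0, hw0⟩ := hDne
  -- conjugation automorphisms
  set γ : E → (DihedralGroup 4 ≃* DihedralGroup 4) :=
    fun w => (φ.symm.trans (MulAut.conjNormal w : D ≃* D)).trans φ with hγdef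
  have hγ : ∀ (w : E) (x : DihedralGroup 4), ψ ((γ w) x) = w * ψ x * w⁻¹ := by
    intro w x
    simp [hγdef, hψ, MulAut.conjNormal_apply]
  -- γ w0 (r 1) = r 1 or r 3
  have hr4 : ((γ w0) (DihedralGroup.r 1)) ^ 4 = 1 := by
    rw [← map_pow, show ((DihedralGroup.r 1 : DihedralGroup 4)) ^ 4 = 1 by decide, map_one]
  have hr2 : ¬ ((γ w0) (DihedralGroup.r 1)) ^ 2 = 1 := by
    rw [← map_pow]
    intro hcon
    have h := (γ w0).injective (hcon.trans (map_one (γ w0)).symm)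
    revert h
    decide
  have hcase : ∀ x : DihedralGroup 4, x ^ 4 = 1 → ¬ x ^ 2 = 1 →
      x = DihedralGroup.r 1 ∨ x = DihedralGroup.r 3 := by decide
  -- produce w1 ∉ D with w1 (ψ r1) w1⁻¹ = ψ r1
  have hstep : ∃ w1 : E, w1 ∉ D ∧ w1 * ψ (.r 1) * w1⁻¹ = ψ (.r 1) := by
    rcases hcase _ hr4 hr2 with h | h
    · exact ⟨w0, hw0, by rw [← hγ, h]⟩
    · refine ⟨w0 * ψ (.sr 0), ?_, ?_⟩
      · intro hcon
        have hm : ψ (.sr 0) ∈ D := (φ.symm (.sr 0)).2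
        have : w0 ∈ D := by
          have := Subgroup.mul_mem D hcon (Subgroup.inv_mem D hm)
          rwa [mul_assoc, mul_inv_cancel, mul_one] at this
        exact hw0 this
      · have h1 : ψ (.sr 0) * ψ (.r 1) * (ψ (.sr 0))⁻¹ = ψ (.r 3) := by
          rw [← map_inv, ← map_mul, ← map_mul]
          exact congrArg ψ (by decide)
        have h3 : (γ w0) (DihedralGroup.r 3) = DihedralGroup.r 1 := by
          have e3 : (DihedralGroup.r 3 : DihedralGroup 4) = (DihedralGroup.r 1) ^ 3 := by decide
          rw [e3, map_pow, h, show ((DihedralGroup.r 3 : DihedralGroup 4)) ^ 3 = DihedralGroup.r 1 by decide]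
        calc (w0 * ψ (.sr 0)) * ψ (.r 1) * (w0 * ψ (.sr 0))⁻¹
            = w0 * (ψ (.sr 0) * ψ (.r 1) * (ψ (.sr 0))⁻¹) * w0⁻¹ := by group
          _ = w0 * ψ (.r 3) * w0⁻¹ := by rw [h1]
          _ = ψ ((γ w0) (DihedralGroup.r 3)) := (hγ w0 _).symm
          _ = ψ (.r 1) := by rw [h3]
  obtain ⟨w1, hw1, hcw1⟩ := hstep
  have hws1 : w1 * ψ (.r 1) = ψ (.r 1) * w1 := by
    have := hcw1
    rw [mul_inv_eq_iff_eq_mul] at this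
    rw [this]
  have hγ1r : (γ w1) (DihedralGroup.r 1) = DihedralGroup.r 1 :=
    hinj (by rw [hγ, hcw1])
  have hri : ∀ i : ZMod 4, (γ w1) (DihedralGroup.r i) = DihedralGroup.r i := by
    intro i
    rw [r_eq_pow i, map_pow, hγ1r]
  -- γ w1 (sr 0) = sr j
  have hsrj : ∃ j : ZMod 4, (γ w1) (DihedralGroup.sr 0) = DihedralGroup.sr j := by
    rcases h : (γ w1) (DihedralGroup.sr 0) with i | j
    · exfalso
      have h2 : (γ w1) (DihedralGroup.sr 0) = (γ w1) (DihedralGroup.r i) := by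
        rw [h, hri]
      have := (γ w1).injective h2
      simp at this
    · exact ⟨j, rfl⟩
  obtain ⟨j, hj⟩ := hsrj
  have hwt1 : w1 * ψ (.sr 0) * w1⁻¹ = ψ (.sr j) := by rw [← hγ, hj]
  have hj4 : j = 0 ∨ j = 1 ∨ j = 2 ∨ j = 3 := by
    have : ∀ jj : ZMod 4, jj = 0 ∨ jj = 1 ∨ jj = 2 ∨ jj = 3 := by decide
    exact this j
  -- helper for the adjusted element w2 = w1 * ψ (r 1)
  have hw2mem : w1 * ψ (.r 1) ∉ D := by
    intro hcon
    have hm : ψ (.r 1) ∈ D := (φ.symm (.r 1)).2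
    have : w1 ∈ D := by
      have := Subgroup.mul_mem D hcon (Subgroup.inv_mem D hm)
      rwa [mul_assoc, mul_inv_cancel, mul_one] at this
    exact hw1 this
  have hws2 : (w1 * ψ (.r 1)) * ψ (.r 1) = ψ (.r 1) * (w1 * ψ (.r 1)) :=
    Commute.mul_left (hws1 : Commute w1 (ψ (.r 1))) (Commute.refl _)
  have hwt2 : ∀ jj : ZMod 4, (γ w1) (DihedralGroup.sr 0) = DihedralGroup.sr jj →
      (w1 * ψ (.r 1)) * ψ (.sr 0) * (w1 * ψ (.r 1))⁻¹ = ψ (.sr (jj + 2)) := by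
    intro jj hjj
    have h1 : ψ (.r 1) * ψ (.sr 0) * (ψ (.r 1))⁻¹ = ψ (.sr 2) := by
      rw [← map_inv, ← map_mul, ← map_mul]
      exact congrArg ψ (by decide)
    have h2 : (γ w1) (DihedralGroup.sr 2) = DihedralGroup.sr (jj + 2) := by
      rw [sr_eq (2 : ZMod 4), map_mul, hjj, hri, DihedralGroup.sr_mul_r]
    calc (w1 * ψ (.r 1)) * ψ (.sr 0) * (w1 * ψ (.r 1))⁻¹
        = w1 * (ψ (.r 1) * ψ (.sr 0) * (ψ (.r 1))⁻¹) * w1⁻¹ := by group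
      _ = w1 * ψ (.sr 2) * w1⁻¹ := by rw [h1]
      _ = ψ ((γ w1) (DihedralGroup.sr 2)) := (hγ w1 _).symm
      _ = ψ (.sr (jj + 2)) := by rw [h2]
  rcases hj4 with rfl | rfl | rfl | rfl
  · -- j = 0 : lemma A with w1
    have hwt : w1 * ψ (.sr 0) = ψ (.sr 0) * w1 := by
      have := hwt1
      rw [mul_inv_eq_iff_eq_mul] at this
      rw [this]
    rcases lemA hDindex ψ hinj hsurjD hcardE hw1 hws1 hwt with h | h
    · exact Or.inl h
    · exact Or.inr (Or.inl h)
  · -- j = 1 : lemma B with w1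
    have hwt : w1 * ψ (.sr 0) = ψ (.sr 1) * w1 := by
      have := hwt1
      rw [mul_inv_eq_iff_eq_mul] at this
      rw [this]
    rcases lemB hDindex ψ hinj hsurjD hcardE hw1 hws1 hwt with h | h
    · exact Or.inr (Or.inr (Or.inl h))
    · exact Or.inr (Or.inr (Or.inr h))
  · -- j = 2 : lemma A with w1 * ψ (r 1)
    have h22 : (2 : ZMod 4) + 2 = 0 := by decide
    have hwt : (w1 * ψ (.r 1)) * ψ (.sr 0) = ψ (.sr 0) * (w1 * ψ (.r 1)) := by
      have := hwt2 2 hj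
      rw [h22] at this
      rw [mul_inv_eq_iff_eq_mul] at this
      rw [this]
    rcases lemA hDindex ψ hinj hsurjD hcardE hw2mem hws2 hwt with h | h
    · exact Or.inl h
    · exact Or.inr (Or.inl h)
  · -- j = 3 : lemma B with w1 * ψ (r 1)
    have h32 : (3 : ZMod 4) + 2 = 1 := by decide
    have hwt : (w1 * ψ (.r 1)) * ψ (.sr 0) = ψ (.sr 1) * (w1 * ψ (.r 1)) := by
      have := hwt2 3 hj
      rw [h32] at this
      rw [mul_inv_eq_iff_eq_mul] at this
      rw [this]
    rcases lemB hDindex ψ hinj hsurjD hcardE hw2mem hws2 hwt with h | h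
    · exact Or.inr (Or.inr (Or.inl h))
    · exact Or.inr (Or.inr (Or.inr h))

end Master

/-- Let `E` be a finite group having a subgroup `D` of index `2` with `D` isomorphic to
the dihedral group `D₈` of order `8` (i.e. `DihedralGroup 4`).  Then `E` is isomorphic to
exactly one of the following four pairwise non-isomorphic groups: `D₈ × C₂`; the central
product `D₈ ∘ C₄`; the dihedral group `D₁₆` of order `16`; and the semidihedral group
`SD₁₆ = ⟨x, y ∣ x⁸ = y² = 1, y x y⁻¹ = x³⟩`.  (Here `GroupA 3 = D₈ × C₂`,
`GroupB 3 = D₈ ∘ C₄`, `DihedralGroup 8 = D₁₆` and `SemidihedralGroup 3 _ = SD₁₆`.) -/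
theorem degree_two_extensions_of_D8 (E : Type*) [Group E] [Finite E]
    (D : Subgroup E) (hDindex : D.index = 2)
    (hiso : Nonempty (D ≃* DihedralGroup 4)) :
    (Nonempty (E ≃* GroupA 3) ∨
     Nonempty (E ≃* GroupB 3) ∨
     Nonempty (E ≃* DihedralGroup 8) ∨
     Nonempty (E ≃* SemidihedralGroup 3 (by omega))) ∧
    (IsEmpty (GroupA 3 ≃* GroupB 3) ∧
     IsEmpty (GroupA 3 ≃* DihedralGroup 8) ∧
     IsEmpty (GroupA 3 ≃* SemidihedralGroup 3 (by omega)) ∧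
     IsEmpty (GroupB 3 ≃* DihedralGroup 8) ∧
     IsEmpty (GroupB 3 ≃* SemidihedralGroup 3 (by omega)) ∧
     IsEmpty (DihedralGroup 8 ≃* SemidihedralGroup 3 (by omega))) := by
  obtain ⟨φ⟩ := hiso
  exact ⟨classify_main E D hDindex φ, noniso_all⟩
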